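/- For every n ≥ 1, the monomial x^n expands in the q-Frobenius–Euler basis as x^n = (1/(1 − λ)) · ∑_{k=0}^{n−1} C(n,k)_q · H_{k,q}(x|λ) + H_{n,q}(x|λ). -/

import Mathlib

open Finset Polynomial

/-- The `q`-integer `[n]_q = (1 - q^n)/(1 - q)` viewed in `ℂ`. -/
noncomputable def qInt (q : ℝ) (n : ℕ) : ℂ := (1 - (q : ℂ) ^ n) / (1 - (q : ℂ))

/-- The `q`-factorial `[n]_q! = ∏_{j=1}^n [j]_q`. -/
noncomputable def qFact (q : ℝ) (n : ℕ) : ℂ := ∏ j ∈ Finset.range n, qInt q (j + 1)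

/-- The `q`-binomial coefficient `[n]_q!/([k]_q! [n-k]_q!)`. -/
noncomputable def qBinom (q : ℝ) (n k : ℕ) : ℂ := qFact q n / (qFact q k * qFact q (n - k))

/-- The formal `q`-exponential `e_q(t) = ∑ t^n/[n]_q!` in `ℂ[x][[t]]`. -/
noncomputable def qExp (q : ℝ) : PowerSeries (Polynomial ℂ) :=
  PowerSeries.mk fun n => Polynomial.C (1 / qFact q n)

/-- The formal series `e_q(xt) = ∑ x^n t^n/[n]_q!` in `ℂ[x][[t]]`. -/
noncomputable def qExpX (q : ℝ) : PowerSeries (Polynomial ℂ) :=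
  PowerSeries.mk fun n => Polynomial.C (1 / qFact q n) * Polynomial.X ^ n

/-- `H : ℕ → ℂ[x]` is the family of `q`-Frobenius-Euler polynomials `H_{n,q}(x|λ)`:
`(∑ H_n t^n/[n]_q!) ⬝ (e_q(t) - λ) = (1 - λ) e_q(xt)` in `ℂ[x][[t]]`. -/
def IsqFrobeniusEuler (q : ℝ) (lam : ℂ) (H : ℕ → Polynomial ℂ) : Prop :=
  (PowerSeries.mk fun n => Polynomial.C (1 / qFact q n) * H n) *
      (qExp q - PowerSeries.C (Polynomial.C lam)) =
    PowerSeries.C (Polynomial.C (1 - lam)) * qExpX q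

lemma qFact_ne_zero (q : ℝ) (hq0 : 0 < q) (hq1 : q < 1) (n : ℕ) : qFact q n ≠ 0 := by
  have hq : (q:ℂ) ≠ 1 := by
    simp only [ne_eq, Complex.ofReal_eq_one]; linarith
  refine Finset.prod_ne_zero_iff.mpr fun j _ => ?_
  have h1 : q ^ (j+1) < 1 := pow_lt_one₀ hq0.le hq1 (Nat.succ_ne_zero j)
  have hpow : (q:ℂ) ^ (j+1) ≠ 1 := by
    rw [← Complex.ofReal_pow]
    simp only [ne_eq, Complex.ofReal_eq_one]
    linarith
  exact div_ne_zero (sub_ne_zero.mpr (Ne.symm hpow)) (sub_ne_zero.mpr (Ne.symm hq))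

/-- For `n ≥ 1`,
`x^n = (1/(1-λ)) ∑_{k=0}^{n-1} C(n,k)_q H_{k,q}(x|λ) + H_{n,q}(x|λ)`. -/
theorem pow_expansion_in_qFrobeniusEuler_basis
    (q : ℝ) (hq0 : 0 < q) (hq1 : q < 1) (lam : ℂ) (hlam : lam ≠ 1)
    (H : ℕ → Polynomial ℂ) (hH : IsqFrobeniusEuler q lam H) (n : ℕ) (hn : 1 ≤ n) :
    (Polynomial.X : Polynomial ℂ) ^ n =
      Polynomial.C (1 / (1 - lam)) *
        (∑ k ∈ Finset.range n, Polynomial.C (qBinom q n k) * H k) + H n := by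

  have hF := qFact_ne_zero q hq0 hq1
  have E := congrArg (PowerSeries.coeff (R := Polynomial ℂ) n) hH
  rw [PowerSeries.coeff_C_mul, PowerSeries.coeff_mul,
    Finset.Nat.sum_antidiagonal_eq_sum_range_succ_mk] at E
  simp only [qExp, qExpX, PowerSeries.coeff_mk, map_sub, PowerSeries.coeff_C] at E
  have hs : ∀ x ∈ Finset.range (n+1),
      Polynomial.C (1 / qFact q x) * H x *
        (Polynomial.C (1 / qFact q (n - x)) - if n - x = 0 then Polynomial.C lam else 0) =
      Polynomial.C (1 / qFact q n) *
        (Polynomial.C (qBinom q n x) * H x -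
          if x = n then Polynomial.C lam * H n else 0) := by
    intro x hx
    have hxn : x ≤ n := Nat.lt_succ_iff.mp (Finset.mem_range.mp hx)
    have hA := hF x; have hB := hF (n - x); have hC := hF n
    have hcoef : (1 / qFact q x) * (1 / qFact q (n - x)) =
        (1 / qFact q n) * qBinom q n x := by
      rw [qBinom]; field_simp
    by_cases h : x = n
    · subst h
      have h0' : qFact q 0 = 1 := Finset.prod_range_zero _
      have hbn : qBinom q x x = 1 := by
        rw [qBinom, Nat.sub_self, h0', mul_one, div_self hC]
      simp only [Nat.sub_self, if_pos rfl, h0', hbn]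
      norm_num
      ring
    · have hnx : ¬ (n - x = 0) := by omega
      rw [if_neg h, if_neg hnx, sub_zero, sub_zero, mul_right_comm,
        ← Polynomial.C_mul, hcoef, Polynomial.C_mul, mul_assoc]
  rw [Finset.sum_congr rfl hs, ← Finset.mul_sum] at E
  have hinner : ∑ x ∈ Finset.range (n+1),
      (Polynomial.C (qBinom q n x) * H x - if x = n then Polynomial.C lam * H n else 0) =
      (∑ x ∈ Finset.range (n+1), Polynomial.C (qBinom q n x) * H x) -
        Polynomial.C lam * H n := by
    rw [Finset.sum_sub_distrib, Finset.sum_ite_eq' (Finset.range (n+1)) n,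
      if_pos (Finset.self_mem_range_succ n)]
  rw [hinner] at E
  have hCne : (Polynomial.C (1 / qFact q n) : Polynomial ℂ) ≠ 0 := by
    simpa using one_div_ne_zero (hF n)
  have F : (∑ x ∈ Finset.range (n+1), Polynomial.C (qBinom q n x) * H x) -
      Polynomial.C lam * H n = (Polynomial.C 1 - Polynomial.C lam) * Polynomial.X ^ n := by
    apply mul_left_cancel₀ hCne
    rw [E]; ring
  have h0' : qFact q 0 = 1 := Finset.prod_range_zero _
  have hbn : qBinom q n n = 1 := by
    rw [qBinom, Nat.sub_self, h0', mul_one, div_self (hF n)]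
  rw [Finset.sum_range_succ, hbn, Polynomial.C_1, one_mul] at F
  have h1l : (1:ℂ) - lam ≠ 0 := sub_ne_zero.mpr (Ne.symm hlam)
  have hS : (∑ k ∈ Finset.range n, Polynomial.C (qBinom q n k) * H k) =
      Polynomial.C (1 - lam) * (Polynomial.X ^ n - H n) := by
    rw [Polynomial.C_sub, Polynomial.C_1]; linear_combination F
  rw [hS, ← mul_assoc, ← Polynomial.C_mul, one_div_mul_cancel h1l, Polynomial.C_1, one_mul]
  ring
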